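/- Let (X, 𝒜, ν) be a measure space, d a positive integer, R > 0, and C, B ≥ 0. Let F : ℝᵈ × X → ℝᵈ be such that x ↦ F(z, x) is measurable for each z, and suppose that (a) for all z₁, z₂ ∈ ℝᵈ with |z₁| ≤ R and |z₂| ≤ R one has ∫_X |F(z₁, x) − F(z₂, x)|² ν(dx) ≤ C|z₁ − z₂|², and (b) ∫_X |F(0, x)|² ν(dx) ≤ B. Define the radial truncation F^R : ℝᵈ × X → ℝᵈ by F^R(z, x) = F(z, x) if |z| ≤ R, F^R(z, x) = ((2R − |z|)/R) · F(R·z/|z|, x) if R ≤ |z| ≤ 2R, and F^R(z, x) = 0 if |z| ≥ 2R. Then there exists a constant K ≥ 0 such that for all z₁, z₂ ∈ ℝᵈ, ∫_X |F^R(z₁, x) − F^R(z₂, x)|² ν(dx) ≤ K|z₁ − z₂|². -/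

import Mathlib

open MeasureTheory

/-- Radial truncation of `F : ℝᵈ × X → ℝᵈ` in its first variable at radius `R`:
`F^R(z,x) = F(z,x)` if `‖z‖ ≤ R`, `F^R(z,x) = ((2R - ‖z‖)/R) • F((R/‖z‖) • z, x)` if
`R ≤ ‖z‖ ≤ 2R`, and `F^R(z,x) = 0` if `‖z‖ ≥ 2R`. -/
noncomputable def radialTruncF {E X V : Type*} [NormedAddCommGroup E] [NormedSpace ℝ E]
    [NormedAddCommGroup V] [NormedSpace ℝ V] (R : ℝ) (F : E → X → V) (z : E) (x : X) : V :=
  if ‖z‖ ≤ R then F z x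
  else if ‖z‖ ≤ 2 * R then ((2 * R - ‖z‖) / R) • F ((R / ‖z‖) • z) x
  else 0

open scoped ENNReal NNReal

lemma sq_add_le4 (a b : ℝ≥0∞) : (a + b)^2 ≤ 4*a^2 + 4*b^2 := by
  calc (a+b)^2 ≤ (2*(a ⊔ b))^2 := by
        gcongr
        calc a + b ≤ (a ⊔ b) + (a ⊔ b) := by gcongr <;> simp
        _ = 2*(a ⊔ b) := (two_mul _).symm
  _ = 4*(a ⊔ b)^2 := by ring
  _ ≤ 4*a^2 + 4*b^2 := by
      have hs : (a ⊔ b)^2 ≤ a^2 + b^2 := by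
        rcases le_total a b with h|h
        · rw [sup_eq_right.2 h]; exact le_add_self
        · rw [sup_eq_left.2 h]; exact le_add_right le_rfl
      calc 4*(a ⊔ b)^2 ≤ 4*(a^2+b^2) := by gcongr
      _ = 4*a^2+4*b^2 := by ring

noncomputable def radProj {E : Type*} [NormedAddCommGroup E] [NormedSpace ℝ E] (R : ℝ) (z : E) : E :=
  if ‖z‖ ≤ R then z else (R/‖z‖) • z

lemma norm_radProj_le {E : Type*} [NormedAddCommGroup E] [NormedSpace ℝ E] {R : ℝ} (hR : 0 < R)
    (z : E) : ‖radProj R z‖ ≤ R := by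
  rw [radProj]
  split_ifs with h
  · exact h
  · push_neg at h
    have hz : 0 < ‖z‖ := hR.trans h
    rw [norm_smul, Real.norm_eq_abs, abs_div, abs_of_pos hR, abs_of_pos hz,
      div_mul_cancel₀ _ hz.ne']

lemma radProj_mixed {E : Type*} [NormedAddCommGroup E] [NormedSpace ℝ E] {R : ℝ} (hR : 0 < R)
    {z₁ z₂ : E} (h₁ : ‖z₁‖ ≤ R) (h₂ : R < ‖z₂‖) :
    ‖radProj R z₁ - radProj R z₂‖ ≤ 2 * ‖z₁ - z₂‖ := by
  have hz₂ : 0 < ‖z₂‖ := hR.trans h₂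
  rw [radProj, radProj, if_pos h₁, if_neg (not_le.2 h₂)]
  have key : ‖z₂ - (R/‖z₂‖) • z₂‖ = ‖z₂‖ - R := by
    nth_rewrite 1 [show z₂ = (1:ℝ) • z₂ by simp]
    rw [← sub_smul, norm_smul, Real.norm_eq_abs, abs_of_nonneg, one_sub_div hz₂.ne',
      div_mul_cancel₀ _ hz₂.ne']
    rw [one_sub_div hz₂.ne']
    exact div_nonneg (by linarith) hz₂.le
  have h3 : ‖z₁‖ - ‖z₂‖ ≤ ‖z₁ - z₂‖ ∧ ‖z₂‖ - ‖z₁‖ ≤ ‖z₁ - z₂‖ := by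
    constructor
    · exact (le_abs_self _).trans (abs_norm_sub_norm_le _ _)
    · calc ‖z₂‖ - ‖z₁‖ ≤ |‖z₂‖ - ‖z₁‖| := le_abs_self _
      _ ≤ ‖z₂ - z₁‖ := abs_norm_sub_norm_le _ _
      _ = ‖z₁ - z₂‖ := norm_sub_rev _ _
  calc ‖z₁ - (R/‖z₂‖) • z₂‖ ≤ ‖z₁ - z₂‖ + ‖z₂ - (R/‖z₂‖) • z₂‖ := by
        rw [show z₁ - (R/‖z₂‖) • z₂ = (z₁ - z₂) + (z₂ - (R/‖z₂‖) • z₂) by abel]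
        exact norm_add_le _ _
  _ = ‖z₁ - z₂‖ + (‖z₂‖ - R) := by rw [key]
  _ ≤ 2 * ‖z₁ - z₂‖ := by nlinarith [h3.1, h3.2, h₁]

lemma radProj_lip {E : Type*} [NormedAddCommGroup E] [NormedSpace ℝ E] {R : ℝ} (hR : 0 < R)
    (z₁ z₂ : E) : ‖radProj R z₁ - radProj R z₂‖ ≤ 2 * ‖z₁ - z₂‖ := by
  rcases le_or_gt ‖z₁‖ R with h₁ | h₁ <;> rcases le_or_gt ‖z₂‖ R with h₂ | h₂
  · rw [radProj, radProj, if_pos h₁, if_pos h₂]; nlinarith [norm_nonneg (z₁ - z₂)]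
  · exact radProj_mixed hR h₁ h₂
  · calc ‖radProj R z₁ - radProj R z₂‖ = ‖radProj R z₂ - radProj R z₁‖ := norm_sub_rev _ _
    _ ≤ 2 * ‖z₂ - z₁‖ := radProj_mixed hR h₂ h₁
    _ = 2 * ‖z₁ - z₂‖ := by rw [norm_sub_rev]
  · -- both outside
    have hz₁ : 0 < ‖z₁‖ := hR.trans h₁
    have hz₂ : 0 < ‖z₂‖ := hR.trans h₂
    rw [radProj, radProj, if_neg (not_le.2 h₁), if_neg (not_le.2 h₂)]
    have step : ‖(R/‖z₁‖) • z₁ - (R/‖z₂‖) • z₂‖ ≤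
        ‖(R/‖z₁‖) • (z₁ - z₂)‖ + ‖((R/‖z₁‖) - (R/‖z₂‖)) • z₂‖ := by
      rw [smul_sub, sub_smul]
      rw [show (R/‖z₁‖) • z₁ - (R/‖z₂‖) • z₂ =
        ((R/‖z₁‖) • z₁ - (R/‖z₁‖) • z₂) + ((R/‖z₁‖) • z₂ - (R/‖z₂‖) • z₂) by abel]
      exact norm_add_le _ _
    have e1 : ‖(R/‖z₁‖) • (z₁ - z₂)‖ ≤ ‖z₁ - z₂‖ := by
      rw [norm_smul, Real.norm_eq_abs, abs_of_pos (by positivity)]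
      have hle : R/‖z₁‖ ≤ 1 := (div_le_one hz₁).2 h₁.le
      nlinarith [norm_nonneg (z₁ - z₂)]
    have e2 : ‖((R/‖z₁‖) - (R/‖z₂‖)) • z₂‖ ≤ ‖z₁ - z₂‖ := by
      rw [norm_smul, Real.norm_eq_abs]
      have : R/‖z₁‖ - R/‖z₂‖ = R * (‖z₂‖ - ‖z₁‖) / (‖z₁‖ * ‖z₂‖) := by
        field_simp
      rw [this, abs_div, abs_mul, abs_of_pos hR, abs_of_pos (mul_pos hz₁ hz₂)]
      have habs : |‖z₂‖ - ‖z₁‖| ≤ ‖z₁ - z₂‖ := by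
        rw [← norm_sub_rev z₂ z₁]; exact abs_norm_sub_norm_le _ _
      rw [div_mul_eq_mul_div, div_le_iff₀ (mul_pos hz₁ hz₂)]
      nlinarith [mul_le_mul h₁.le habs (abs_nonneg _) hz₁.le, hz₂.le, norm_nonneg (z₁-z₂)]
    calc _ ≤ _ := step
    _ ≤ ‖z₁ - z₂‖ + ‖z₁ - z₂‖ := add_le_add e1 e2
    _ = 2 * ‖z₁ - z₂‖ := (two_mul _).symm

noncomputable def radCut {E : Type*} [NormedAddCommGroup E] (R : ℝ) (z : E) : ℝ :=
  max 0 (min 1 ((2*R - ‖z‖)/R))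

lemma radCut_nonneg {E : Type*} [NormedAddCommGroup E] (R : ℝ) (z : E) : 0 ≤ radCut R z :=
  le_max_left _ _

lemma radCut_le_one {E : Type*} [NormedAddCommGroup E] (R : ℝ) (z : E) : radCut R z ≤ 1 :=
  max_le zero_le_one (min_le_left _ _)

lemma abs_radCut_le_one {E : Type*} [NormedAddCommGroup E] (R : ℝ) (z : E) : |radCut R z| ≤ 1 := by
  rw [abs_of_nonneg (radCut_nonneg R z)]; exact radCut_le_one R z

lemma radCut_lip {E : Type*} [NormedAddCommGroup E] {R : ℝ} (hR : 0 < R) (z₁ z₂ : E) :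
    |radCut R z₁ - radCut R z₂| ≤ ‖z₁ - z₂‖ / R := by
  have h1 : |radCut R z₁ - radCut R z₂| ≤
      |min 1 ((2*R - ‖z₁‖)/R) - min 1 ((2*R - ‖z₂‖)/R)| := by
    have := abs_max_sub_max_le_max (0:ℝ) (min 1 ((2*R - ‖z₁‖)/R)) 0 (min 1 ((2*R - ‖z₂‖)/R))
    simpa [radCut] using this
  have h2 : |min 1 ((2*R - ‖z₁‖)/R) - min 1 ((2*R - ‖z₂‖)/R)| ≤
      |(2*R - ‖z₁‖)/R - (2*R - ‖z₂‖)/R| := by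
    have := abs_min_sub_min_le_max (1:ℝ) ((2*R - ‖z₁‖)/R) 1 ((2*R - ‖z₂‖)/R)
    simpa using this
  have h3 : |(2*R - ‖z₁‖)/R - (2*R - ‖z₂‖)/R| = |‖z₂‖ - ‖z₁‖| / R := by
    rw [div_sub_div_same, abs_div, abs_of_pos hR]
    ring_nf
  have h4 : |‖z₂‖ - ‖z₁‖| ≤ ‖z₁ - z₂‖ := by
    rw [← norm_sub_rev z₂ z₁]; exact abs_norm_sub_norm_le _ _
  calc |radCut R z₁ - radCut R z₂| ≤ _ := h1
  _ ≤ _ := h2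
  _ = |‖z₂‖ - ‖z₁‖| / R := h3
  _ ≤ ‖z₁ - z₂‖ / R := by gcongr


lemma radialTruncF_eq {E X V : Type*} [NormedAddCommGroup E] [NormedSpace ℝ E]
    [NormedAddCommGroup V] [NormedSpace ℝ V] {R : ℝ} (hR : 0 < R) (F : E → X → V)
    (z : E) (x : X) : radialTruncF R F z x = radCut R z • F (radProj R z) x := by
  rw [radialTruncF, radCut, radProj]
  split_ifs with h h2
  · have : (1:ℝ) ≤ (2*R - ‖z‖)/R := by rw [le_div_iff₀ hR]; linarith
    rw [min_eq_left this, max_eq_right zero_le_one, one_smul]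
  · push_neg at h
    have hge : (0:ℝ) ≤ (2*R - ‖z‖)/R := div_nonneg (by linarith) hR.le
    have hle : (2*R - ‖z‖)/R ≤ 1 := by rw [div_le_one hR]; linarith
    rw [min_eq_right hle, max_eq_right hge]
  · push_neg at h h2
    have : (2*R - ‖z‖)/R ≤ 0 := div_nonpos_of_nonpos_of_nonneg (by linarith) hR.le
    rw [min_eq_right (this.trans zero_le_one), max_eq_left this, zero_smul]


theorem stmt_5 {X : Type*} [MeasurableSpace X] (ν : Measure X)
    (d : ℕ) (hd : 0 < d) (R C B : ℝ) (hR : 0 < R) (hC : 0 ≤ C) (hB : 0 ≤ B)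
    (F : EuclideanSpace ℝ (Fin d) → X → EuclideanSpace ℝ (Fin d))
    (hmeas : ∀ z, Measurable fun x => F z x)
    (ha : ∀ z₁ z₂ : EuclideanSpace ℝ (Fin d), ‖z₁‖ ≤ R → ‖z₂‖ ≤ R →
      ∫⁻ x, (‖F z₁ x - F z₂ x‖₊ : ENNReal) ^ 2 ∂ν ≤ ENNReal.ofReal (C * ‖z₁ - z₂‖ ^ 2))
    (hb : ∫⁻ x, (‖F 0 x‖₊ : ENNReal) ^ 2 ∂ν ≤ ENNReal.ofReal B) :
    ∃ K : ℝ, 0 ≤ K ∧ ∀ z₁ z₂ : EuclideanSpace ℝ (Fin d),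
      ∫⁻ x, (‖radialTruncF R F z₁ x - radialTruncF R F z₂ x‖₊ : ENNReal) ^ 2 ∂ν
        ≤ ENNReal.ofReal (K * ‖z₁ - z₂‖ ^ 2) := by
  refine ⟨16*C + (16*C*R^2 + 16*B)/R^2, by positivity, fun z₁ z₂ => ?_⟩
  set p₁ := radProj R z₁ with hp₁
  set p₂ := radProj R z₂ with hp₂
  set φ₁ := radCut R z₁ with hφ₁
  set φ₂ := radCut R z₂ with hφ₂
  set D : ℝ≥0∞ := 4 * ENNReal.ofReal ((‖z₁ - z₂‖/R)^2) with hD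
  have hDne : D ≠ ⊤ := by
    rw [hD]; exact ENNReal.mul_ne_top (by simp) ENNReal.ofReal_ne_top
  -- pointwise bound
  have hpt : ∀ x, (‖radialTruncF R F z₁ x - radialTruncF R F z₂ x‖₊ : ℝ≥0∞)^2 ≤
      4 * (‖F p₁ x - F p₂ x‖₊ : ℝ≥0∞)^2 + D * (‖F p₂ x‖₊ : ℝ≥0∞)^2 := by
    intro x
    rw [radialTruncF_eq hR, radialTruncF_eq hR]
    have hdecomp : φ₁ • F p₁ x - φ₂ • F p₂ x
        = φ₁ • (F p₁ x - F p₂ x) + (φ₁ - φ₂) • F p₂ x := by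
      rw [smul_sub, sub_smul]; abel
    rw [hdecomp]
    have step1 : (‖φ₁ • (F p₁ x - F p₂ x) + (φ₁ - φ₂) • F p₂ x‖₊ : ℝ≥0∞)^2 ≤
        ((‖φ₁ • (F p₁ x - F p₂ x)‖₊ : ℝ≥0∞) + (‖(φ₁ - φ₂) • F p₂ x‖₊ : ℝ≥0∞))^2 := by
      gcongr
      exact_mod_cast nnnorm_add_le _ _
    have h1 : ‖φ₁‖₊ ≤ 1 := by
      rw [← NNReal.coe_le_coe]
      simpa [Real.norm_eq_abs] using abs_radCut_le_one R z₁
    have t1 : (‖φ₁ • (F p₁ x - F p₂ x)‖₊ : ℝ≥0∞)^2 ≤ (‖F p₁ x - F p₂ x‖₊ : ℝ≥0∞)^2 := by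
      gcongr
      rw [nnnorm_smul]
      exact mul_le_of_le_one_left zero_le h1
    have t2 : (‖(φ₁ - φ₂) • F p₂ x‖₊ : ℝ≥0∞)^2 ≤
        ENNReal.ofReal ((‖z₁ - z₂‖/R)^2) * (‖F p₂ x‖₊ : ℝ≥0∞)^2 := by
      rw [nnnorm_smul]
      push_cast
      rw [← enorm_eq_nnnorm (φ₁ - φ₂), Real.enorm_eq_ofReal_abs, mul_pow, ← ENNReal.ofReal_pow (abs_nonneg _)]
      gcongr
      exact radCut_lip hR z₁ z₂
    calc _ ≤ _ := step1
    _ ≤ 4 * (‖φ₁ • (F p₁ x - F p₂ x)‖₊ : ℝ≥0∞)^2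
        + 4 * (‖(φ₁ - φ₂) • F p₂ x‖₊ : ℝ≥0∞)^2 := sq_add_le4 _ _
    _ ≤ 4 * (‖F p₁ x - F p₂ x‖₊ : ℝ≥0∞)^2 + D * (‖F p₂ x‖₊ : ℝ≥0∞)^2 := by
        rw [hD, mul_assoc]
        gcongr
  have hmA : Measurable fun x => (‖F p₁ x - F p₂ x‖₊ : ℝ≥0∞)^2 :=
    ((((hmeas p₁).sub (hmeas p₂)).nnnorm).coe_nnreal_ennreal).pow_const 2
  have hmB : Measurable fun x => (‖F p₂ x‖₊ : ℝ≥0∞)^2 :=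
    (((hmeas p₂).nnnorm).coe_nnreal_ennreal).pow_const 2
  have hsplit : ∫⁻ x, (4 * (‖F p₁ x - F p₂ x‖₊ : ℝ≥0∞)^2 + D * (‖F p₂ x‖₊ : ℝ≥0∞)^2) ∂ν
      = 4 * ∫⁻ x, (‖F p₁ x - F p₂ x‖₊ : ℝ≥0∞)^2 ∂ν + D * ∫⁻ x, (‖F p₂ x‖₊ : ℝ≥0∞)^2 ∂ν := by
    rw [lintegral_add_left (hmA.const_mul 4), lintegral_const_mul' _ _ (by simp),
      lintegral_const_mul' _ _ hDne]
  have hA : ∫⁻ x, (‖F p₁ x - F p₂ x‖₊ : ℝ≥0∞)^2 ∂ν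
      ≤ ENNReal.ofReal (C * (2*‖z₁ - z₂‖)^2) := by
    refine (ha p₁ p₂ (norm_radProj_le hR z₁) (norm_radProj_le hR z₂)).trans
      (ENNReal.ofReal_le_ofReal ?_)
    have hlip := radProj_lip hR z₁ z₂
    exact mul_le_mul_of_nonneg_left (pow_le_pow_left₀ (norm_nonneg _) hlip 2) hC
  have hBint : ∫⁻ x, (‖F p₂ x‖₊ : ℝ≥0∞)^2 ∂ν ≤ ENNReal.ofReal (4*(C*R^2) + 4*B) := by
    have hptB : ∀ x, (‖F p₂ x‖₊ : ℝ≥0∞)^2 ≤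
        4 * (‖F p₂ x - F 0 x‖₊ : ℝ≥0∞)^2 + 4 * (‖F 0 x‖₊ : ℝ≥0∞)^2 := by
      intro x
      have hn : ‖F p₂ x‖₊ ≤ ‖F p₂ x - F 0 x‖₊ + ‖F 0 x‖₊ := by
        simpa using nnnorm_add_le (F p₂ x - F 0 x) (F 0 x)
      have : (‖F p₂ x‖₊ : ℝ≥0∞)^2 ≤
          ((‖F p₂ x - F 0 x‖₊ : ℝ≥0∞) + (‖F 0 x‖₊ : ℝ≥0∞))^2 := by
        gcongr
        exact_mod_cast hn
      exact this.trans (sq_add_le4 _ _)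
    have hmAB : Measurable fun x => (‖F p₂ x - F 0 x‖₊ : ℝ≥0∞)^2 :=
      ((((hmeas p₂).sub (hmeas 0)).nnnorm).coe_nnreal_ennreal).pow_const 2
    calc ∫⁻ x, (‖F p₂ x‖₊ : ℝ≥0∞)^2 ∂ν
        ≤ ∫⁻ x, (4 * (‖F p₂ x - F 0 x‖₊ : ℝ≥0∞)^2 + 4 * (‖F 0 x‖₊ : ℝ≥0∞)^2) ∂ν :=
          lintegral_mono hptB
    _ = 4 * ∫⁻ x, (‖F p₂ x - F 0 x‖₊ : ℝ≥0∞)^2 ∂ν + 4 * ∫⁻ x, (‖F 0 x‖₊ : ℝ≥0∞)^2 ∂ν := by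
        rw [lintegral_add_left (hmAB.const_mul 4), lintegral_const_mul' _ _ (by simp),
          lintegral_const_mul' _ _ (by simp)]
    _ ≤ 4 * ENNReal.ofReal (C * ‖p₂ - 0‖^2) + 4 * ENNReal.ofReal B := by
        gcongr
        exact ha p₂ 0 (norm_radProj_le hR z₂) (by simp [hR.le])
    _ ≤ ENNReal.ofReal (4*(C*R^2) + 4*B) := by
        rw [ENNReal.ofReal_add (by positivity) (by positivity),
          show ((4:ℝ≥0∞)) = ENNReal.ofReal 4 by simp,
          ← ENNReal.ofReal_mul (by norm_num), ← ENNReal.ofReal_mul (by norm_num)]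
        gcongr
        rw [sub_zero]
        have h1 : ‖p₂‖ ≤ R := norm_radProj_le hR z₂
        nlinarith [norm_nonneg p₂]
  calc ∫⁻ x, (‖radialTruncF R F z₁ x - radialTruncF R F z₂ x‖₊ : ℝ≥0∞)^2 ∂ν
      ≤ ∫⁻ x, (4 * (‖F p₁ x - F p₂ x‖₊ : ℝ≥0∞)^2 + D * (‖F p₂ x‖₊ : ℝ≥0∞)^2) ∂ν :=
        lintegral_mono hpt
  _ = 4 * ∫⁻ x, (‖F p₁ x - F p₂ x‖₊ : ℝ≥0∞)^2 ∂ν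
      + D * ∫⁻ x, (‖F p₂ x‖₊ : ℝ≥0∞)^2 ∂ν := hsplit
  _ ≤ 4 * ENNReal.ofReal (C * (2*‖z₁ - z₂‖)^2)
      + D * ENNReal.ofReal (4*(C*R^2) + 4*B) := by gcongr
  _ = ENNReal.ofReal (4 * (C * (2*‖z₁ - z₂‖)^2)
      + 4 * ((‖z₁ - z₂‖/R)^2 * (4*(C*R^2) + 4*B))) := by
      have h4 : ENNReal.ofReal (4:ℝ) = 4 := by norm_num
      have e₁ : (4:ℝ≥0∞) * ENNReal.ofReal (C * (2*‖z₁ - z₂‖)^2)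
          = ENNReal.ofReal (4 * (C * (2*‖z₁ - z₂‖)^2)) := by
        rw [ENNReal.ofReal_mul (by norm_num : (0:ℝ) ≤ 4), h4]
      have e₂ : D * ENNReal.ofReal (4*(C*R^2) + 4*B)
          = ENNReal.ofReal (4 * ((‖z₁ - z₂‖/R)^2 * (4*(C*R^2) + 4*B))) := by
        rw [hD, ENNReal.ofReal_mul (by norm_num : (0:ℝ) ≤ 4), h4,
          ENNReal.ofReal_mul (by positivity : (0:ℝ) ≤ (‖z₁ - z₂‖/R)^2), mul_assoc]
      rw [e₁, e₂, ← ENNReal.ofReal_add (by positivity) (by positivity)]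
  _ ≤ ENNReal.ofReal ((16*C + (16*C*R^2 + 16*B)/R^2) * ‖z₁ - z₂‖^2) := by
      apply ENNReal.ofReal_le_ofReal
      have hR2 : (0:ℝ) < R^2 := by positivity
      rw [div_pow]
      field_simp
      ring_nf
      nlinarith [sq_nonneg (‖z₁ - z₂‖), hR2]
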